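/- For a sequence of walk steps starting at height 0 where step i adds a_i ∈ [k − ⌈y_i/k⌉, k] to the current height y_i (so heights stay defined), any walk whose first Δ steps all equal k and which thereafter never goes below height kΔ satisfies: every later step a_i with a_i ∈ [k−Δ, k] automatically satisfies a_i ∈ [k − ⌈y_i/k⌉, k]. Hence the number of walks of length n−1 obeying the constraint a_i ∈ [k − ⌈y_i/k⌉, k] is at least the number of [k−Δ, k]-restricted walks of length n−1−Δ that never go below 0. -/

import Mathlib

open Finset

lemma ceil_div_ge {k : ℕ} (hk : 1 ≤ k) {y d : ℤ} (h : (k : ℤ) * d ≤ y) :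
    d ≤ ⌈((y : ℚ)) / (k : ℚ)⌉ := by
  have hk' : (0 : ℚ) < (k : ℚ) := by exact_mod_cast hk
  have h1 : (d : ℚ) ≤ (y : ℚ) / (k : ℚ) := by
    rw [le_div_iff₀ hk']
    exact_mod_cast (by linarith : d * (k : ℤ) ≤ y)
  have h2 : ((d : ℤ) : ℚ) ≤ (⌈(y : ℚ) / (k : ℚ)⌉ : ℚ) :=
    le_trans h1 (Int.le_ceil _)
  exact_mod_cast h2

lemma ceil_div_le {k : ℕ} (hk : 1 ≤ k) {y d : ℤ} (h : y ≤ (k : ℤ) * d) :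
    ⌈((y : ℚ)) / (k : ℚ)⌉ ≤ d := by
  have hk' : (0 : ℚ) < (k : ℚ) := by exact_mod_cast hk
  rw [Int.ceil_le, div_le_iff₀ hk']
  exact_mod_cast (by linarith : y ≤ d * (k : ℤ))

lemma target_finite (k n : ℕ) (hk : 1 ≤ k) :
    Finite {a : ℕ → ℤ //
        (∀ i < n - 1,
          (k : ℤ) - ⌈((∑ t ∈ Finset.range i, a t : ℤ) : ℚ) / (k : ℚ)⌉ ≤ a i ∧
            a i ≤ (k : ℤ)) ∧
        (∀ i, n - 1 ≤ i → a i = 0)} := by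
  have hbound : ∀ a : {a : ℕ → ℤ //
        (∀ i < n - 1,
          (k : ℤ) - ⌈((∑ t ∈ Finset.range i, a t : ℤ) : ℚ) / (k : ℚ)⌉ ≤ a i ∧
            a i ≤ (k : ℤ)) ∧
        (∀ i, n - 1 ≤ i → a i = 0)},
      ∀ i < n - 1, a.1 i ∈ Set.Icc ((k : ℤ) - n) (k : ℤ) := by
    rintro ⟨a, ha1, ha2⟩ i hi
    have hup : ∀ t < n - 1, a t ≤ (k : ℤ) := fun t ht => (ha1 t ht).2
    have hsum : (∑ t ∈ Finset.range i, a t) ≤ (k : ℤ) * n := by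
      calc (∑ t ∈ Finset.range i, a t) ≤ ∑ t ∈ Finset.range i, (k : ℤ) := by
            apply Finset.sum_le_sum
            intro t ht
            exact hup t (lt_trans (Finset.mem_range.mp ht) hi)
        _ = (i : ℤ) * k := by simp [mul_comm]
        _ ≤ (k : ℤ) * n := by
            have : (i : ℤ) ≤ n := by exact_mod_cast le_of_lt (lt_of_lt_of_le hi (Nat.sub_le _ _))
            nlinarith [ (by exact_mod_cast hk : (1:ℤ) ≤ k) ]
    have hceil := ceil_div_le hk hsum
    have hlo := (ha1 i hi).1
    constructor
    · linarith
    · exact (ha1 i hi).2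
  apply Finite.of_injective
    (f := fun a : {a : ℕ → ℤ //
        (∀ i < n - 1,
          (k : ℤ) - ⌈((∑ t ∈ Finset.range i, a t : ℤ) : ℚ) / (k : ℚ)⌉ ≤ a i ∧
            a i ≤ (k : ℤ)) ∧
        (∀ i, n - 1 ≤ i → a i = 0)} =>
      fun i : Fin (n - 1) => (⟨a.1 i, hbound a i i.2⟩ : Set.Icc ((k : ℤ) - n) (k : ℤ)))
  intro a b hab
  apply Subtype.ext
  funext j
  by_cases hj : j < n - 1
  · have := congrFun hab ⟨j, hj⟩
    simpa using congrArg Subtype.val this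
  · rw [a.2.2 j (le_of_not_gt hj), b.2.2 j (le_of_not_gt hj)]

theorem constrained_walks_lower_bound (k Δ n : ℕ) (hk : 1 ≤ k) (hΔ : 1 ≤ Δ)
    (hn : Δ + 1 ≤ n) :
    (∀ (N : ℕ) (a : ℕ → ℤ), (∀ i < Δ, a i = (k : ℤ)) →
      (∀ i, Δ ≤ i → i ≤ N → (k : ℤ) * Δ ≤ ∑ t ∈ Finset.range i, a t) →
      ∀ i, Δ ≤ i → i < N → (k : ℤ) - Δ ≤ a i → a i ≤ k →
        (k : ℤ) - ⌈((∑ t ∈ Finset.range i, a t : ℤ) : ℚ) / (k : ℚ)⌉ ≤ a i ∧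
          a i ≤ (k : ℤ)) ∧
    Nat.card {a : ℕ → ℤ //
        (∀ i < n - 1 - Δ, (k : ℤ) - Δ ≤ a i ∧ a i ≤ k) ∧
        (∀ i, n - 1 - Δ ≤ i → a i = 0) ∧
        (∀ m ≤ n - 1 - Δ, 0 ≤ ∑ t ∈ Finset.range m, a t)} ≤
      Nat.card {a : ℕ → ℤ //
        (∀ i < n - 1,
          (k : ℤ) - ⌈((∑ t ∈ Finset.range i, a t : ℤ) : ℚ) / (k : ℚ)⌉ ≤ a i ∧
            a i ≤ (k : ℤ)) ∧
        (∀ i, n - 1 ≤ i → a i = 0)} := by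
  constructor
  · intro N a h1 h2 i hiΔ hiN hlo hhi
    refine ⟨?_, hhi⟩
    have hy := h2 i hiΔ (le_of_lt hiN)
    have hceil : (Δ : ℤ) ≤ ⌈((∑ t ∈ Finset.range i, a t : ℤ) : ℚ) / (k : ℚ)⌉ :=
      ceil_div_ge hk hy
    linarith
  · haveI := target_finite k n hk
    set m := n - 1 - Δ with hm
    have hΔn : Δ ≤ n - 1 := by omega
    have hmn : m + Δ = n - 1 := by omega
    -- the embedding
    set f : (ℕ → ℤ) → (ℕ → ℤ) := fun a i =>
      if i < Δ then (k : ℤ) else if i < n - 1 then a (i - Δ) else 0 with hf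
    have sum_f : ∀ (a : ℕ → ℤ), ∀ j ≤ m,
        (∑ t ∈ Finset.range (Δ + j), f a t) =
          (k : ℤ) * Δ + ∑ s ∈ Finset.range j, a s := by
      intro a j hj
      rw [Finset.sum_range_add]
      congr 1
      · rw [Finset.sum_congr rfl (fun t ht => by
          simp only [hf]
          rw [if_pos (Finset.mem_range.mp ht)])]
        simp [mul_comm]
      · apply Finset.sum_congr rfl
        intro s hs
        have hs' := Finset.mem_range.mp hs
        simp only [hf]
        rw [if_neg (by omega), if_pos (by omega)]
        congr 1
        omega
    have hmemb : ∀ a : {a : ℕ → ℤ //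
        (∀ i < m, (k : ℤ) - Δ ≤ a i ∧ a i ≤ k) ∧
        (∀ i, m ≤ i → a i = 0) ∧
        (∀ m' ≤ m, 0 ≤ ∑ t ∈ Finset.range m', a t)},
        ((∀ i < n - 1,
          (k : ℤ) - ⌈((∑ t ∈ Finset.range i, f a.1 t : ℤ) : ℚ) / (k : ℚ)⌉ ≤ f a.1 i ∧
            f a.1 i ≤ (k : ℤ)) ∧
        (∀ i, n - 1 ≤ i → f a.1 i = 0)) := by
      rintro ⟨a, ha1, ha2, ha3⟩
      constructor
      · intro i hi
        by_cases hiΔ : i < Δ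
        · have hfi : f a i = (k : ℤ) := by simp only [hf]; rw [if_pos hiΔ]
          have hsum : (0 : ℤ) ≤ ∑ t ∈ Finset.range i, f a t := by
            apply Finset.sum_nonneg
            intro t ht
            have ht' : t < Δ := lt_trans (Finset.mem_range.mp ht) hiΔ
            simp only [hf]
            rw [if_pos ht']
            positivity
          have hceil : (0 : ℤ) ≤ ⌈((∑ t ∈ Finset.range i, f a t : ℤ) : ℚ) / (k : ℚ)⌉ :=
            ceil_div_ge hk (by simpa using hsum)
          rw [hfi]
          constructor <;> linarith
        · have hiΔ' : Δ ≤ i := le_of_not_gt hiΔ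
          have hfi : f a i = a (i - Δ) := by
            simp only [hf]; rw [if_neg hiΔ, if_pos hi]
          have hjm : i - Δ < m := by omega
          have hjm' : i - Δ ≤ m := le_of_lt hjm
          have hik : Δ + (i - Δ) = i := by omega
          have hsum : (∑ t ∈ Finset.range i, f a t) =
              (k : ℤ) * Δ + ∑ s ∈ Finset.range (i - Δ), a s := by
            have h := sum_f a (i - Δ) hjm'
            rwa [hik] at h
          have hpos := ha3 (i - Δ) hjm'
          have hy : (k : ℤ) * Δ ≤ ∑ t ∈ Finset.range i, f a t := by
            rw [hsum]; linarith
          have hceil : (Δ : ℤ) ≤ ⌈((∑ t ∈ Finset.range i, f a t : ℤ) : ℚ) / (k : ℚ)⌉ :=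
            ceil_div_ge hk hy
          have hbounds := ha1 (i - Δ) hjm
          rw [hfi]
          exact ⟨by linarith [hbounds.1], hbounds.2⟩
      · intro i hi
        simp only [hf]
        rw [if_neg (by omega), if_neg (by omega)]
    set F : {a : ℕ → ℤ //
        (∀ i < m, (k : ℤ) - Δ ≤ a i ∧ a i ≤ k) ∧
        (∀ i, m ≤ i → a i = 0) ∧
        (∀ m' ≤ m, 0 ≤ ∑ t ∈ Finset.range m', a t)} →
      {a : ℕ → ℤ //
        (∀ i < n - 1,
          (k : ℤ) - ⌈((∑ t ∈ Finset.range i, a t : ℤ) : ℚ) / (k : ℚ)⌉ ≤ a i ∧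
            a i ≤ (k : ℤ)) ∧
        (∀ i, n - 1 ≤ i → a i = 0)} := fun a => ⟨f a.1, hmemb a⟩ with hF
    apply Nat.card_le_card_of_injective F
    intro a b hab
    have hab' : f a.1 = f b.1 := congrArg Subtype.val hab
    apply Subtype.ext
    funext j
    by_cases hj : j < m
    · have e : ∀ c : ℕ → ℤ, f c (Δ + j) = c j := by
        intro c
        simp only [hf]
        rw [if_neg (show ¬ Δ + j < Δ by omega), if_pos (show Δ + j < n - 1 by omega)]
        congr 1
        omega
      have h1 := congrFun hab' (Δ + j)
      rwa [e a.1, e b.1] at h1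
    · rw [a.2.2.1 j (le_of_not_gt hj), b.2.2.1 j (le_of_not_gt hj)]
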